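/- Let G be a finite connected graph with positive conductances and p > 1. If θ and η are two flows from a to b that both satisfy the cycle law and have equal strength (∑_{x∼a} θ(ax) = ∑_{x∼a} η(ax)), then θ = η. -/

import Mathlib

open Finset

namespace FlowsAux

variable {V : Type*} {G : SimpleGraph V}

/-- Sum of an edge function along a walk. -/
def wsum (ψ : V → V → ℝ) : {u v : V} → G.Walk u v → ℝ
  | _, _, SimpleGraph.Walk.nil => 0
  | _, _, @SimpleGraph.Walk.cons _ _ u v _ _ p => ψ u v + wsum ψ p

@[simp] lemma wsum_nil (ψ : V → V → ℝ) {u : V} :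
    wsum ψ (SimpleGraph.Walk.nil : G.Walk u u) = 0 := rfl

@[simp] lemma wsum_cons (ψ : V → V → ℝ) {u v w : V} (h : G.Adj u v) (p : G.Walk v w) :
    wsum ψ (SimpleGraph.Walk.cons h p) = ψ u v + wsum ψ p := rfl

lemma wsum_append (ψ : V → V → ℝ) {u v w : V} (p : G.Walk u v) (q : G.Walk v w) :
    wsum ψ (p.append q) = wsum ψ p + wsum ψ q := by
  induction p with
  | nil => simp
  | cons h p ih => simp only [SimpleGraph.Walk.cons_append, wsum_cons, ih]; ring

lemma wsum_reverse (ψ : V → V → ℝ) (hanti : ∀ x y, ψ x y = -ψ y x)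
    {u v : V} (p : G.Walk u v) : wsum ψ p.reverse = -wsum ψ p := by
  induction p with
  | nil => simp
  | cons h p ih =>
      rw [SimpleGraph.Walk.reverse_cons, wsum_append, ih, wsum_cons, wsum_cons, wsum_nil,
        hanti _ _]
      ring

lemma wsum_eq (ψ : V → V → ℝ) {u v : V} (p : G.Walk u v) :
    wsum ψ p = ∑ i : Fin p.length, ψ (p.getVert i) (p.getVert (i + 1)) := by
  induction p with
  | nil => simp [wsum]; exact Or.inl (Finset.univ_eq_empty_iff.mpr ⟨fun i => Fin.elim0 i⟩)
  | cons h p ih =>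
      rw [wsum_cons, ih, SimpleGraph.Walk.length_cons, Fin.sum_univ_succ]
      simp [SimpleGraph.Walk.getVert_cons_succ]

lemma exists_potential (hconn : G.Connected) (a : V)
    (ψ : V → V → ℝ) (hanti : ∀ x y, ψ x y = -ψ y x)
    (hclosed : ∀ w : G.Walk a a, wsum ψ w = 0) :
    ∃ f : V → ℝ, ∀ x y, G.Adj x y → ψ x y = f y - f x := by
  classical
  have hW : ∀ x, Nonempty (G.Walk a x) := fun x => hconn.preconnected a x
  refine ⟨fun x => wsum ψ (hW x).some, fun x y hxy => ?_⟩
  have h0 := hclosed (((hW x).some).append (SimpleGraph.Walk.cons hxy ((hW y).some).reverse))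
  rw [wsum_append, wsum_cons, wsum_reverse ψ hanti] at h0
  linarith

lemma strictMono_div_abs_rpow (q : ℝ) (hq : q < 1) :
    StrictMono (fun t : ℝ => t / |t| ^ q) := by
  have h1q : 0 < 1 - q := by linarith
  have hpos : ∀ t : ℝ, 0 < t → t / |t| ^ q = t ^ (1 - q) := by
    intro t ht
    rw [abs_of_pos ht, Real.rpow_sub ht, Real.rpow_one]
  have hneg : ∀ t : ℝ, t < 0 → t / |t| ^ q = -((-t) ^ (1 - q)) := by
    intro t ht
    rw [abs_of_neg ht, Real.rpow_sub (by linarith), Real.rpow_one]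
    ring
  have key : ∀ u v : ℝ, 0 ≤ u → u < v → u / |u| ^ q < v / |v| ^ q := by
    intro u v hu huv
    have hv : 0 < v := lt_of_le_of_lt hu huv
    rcases eq_or_lt_of_le hu with h | h
    · rw [← h, zero_div, hpos v hv]
      exact Real.rpow_pos_of_pos hv _
    · rw [hpos u h, hpos v hv]
      exact Real.rpow_lt_rpow (le_of_lt h) huv h1q
  intro s t hst
  simp only []
  rcases le_or_gt 0 s with hs | hs
  · exact key s t hs hst
  · rcases le_or_gt 0 t with ht | ht
    · have h1 : s / |s| ^ q < 0 := by
        rw [hneg s hs]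
        have := Real.rpow_pos_of_pos (neg_pos.mpr hs) (1 - q)
        linarith
      have h2 : 0 ≤ t / |t| ^ q := by
        rcases eq_or_lt_of_le ht with h | h
        · rw [← h, zero_div]
        · rw [hpos t h]
          exact le_of_lt (Real.rpow_pos_of_pos h _)
      linarith
    · rw [hneg s hs, hneg t ht]
      have := Real.rpow_lt_rpow (le_of_lt (neg_pos.mpr ht)) (by linarith : -t < -s) h1q
      linarith

lemma strictMono_mul_key {F : ℝ → ℝ} (hF : StrictMono F) (s t : ℝ) :
    0 ≤ (s - t) * (F s - F t) ∧ ((s - t) * (F s - F t) = 0 → s = t) := by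
  rcases lt_trichotomy s t with h | h | h
  · have := hF h
    constructor
    · nlinarith
    · intro h0; nlinarith
  · simp [h]
  · have := hF h
    constructor
    · nlinarith
    · intro h0; nlinarith

end FlowsAux

/-- Two flows satisfying the cycle law with equal strength are equal. -/
theorem flows_cycle_law_equal_strength_eq {V : Type*} [Fintype V] [DecidableEq V]
    (G : SimpleGraph V) [DecidableRel G.Adj] (hconn : G.Connected)
    (p : ℝ) (hp : 1 < p)
    (c : V → V → ℝ) (hc_sym : ∀ x y, c x y = c y x)
    (hc_pos : ∀ x y, G.Adj x y → 0 < c x y)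
    (a b : V)
    (θ η : V → V → ℝ)
    (hθanti : ∀ x y, θ x y = -θ y x)
    (hθnode : ∀ x, x ≠ a → x ≠ b → ∑ y ∈ G.neighborFinset x, θ x y = 0)
    (hηanti : ∀ x y, η x y = -η y x)
    (hηnode : ∀ x, x ≠ a → x ≠ b → ∑ y ∈ G.neighborFinset x, η x y = 0)
    (hθcycle : ∀ (n : ℕ) (xs : Fin (n + 1) → V),
      (∀ i : Fin n, G.Adj (xs i.castSucc) (xs i.succ)) →
      xs (Fin.last n) = xs 0 →
      ∑ i : Fin n, (c (xs i.castSucc) (xs i.succ))⁻¹ ^ ((1 : ℝ) / (p - 1)) *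
        (θ (xs i.castSucc) (xs i.succ) /
          |θ (xs i.castSucc) (xs i.succ)| ^ ((p - 2) / (p - 1))) = 0)
    (hηcycle : ∀ (n : ℕ) (xs : Fin (n + 1) → V),
      (∀ i : Fin n, G.Adj (xs i.castSucc) (xs i.succ)) →
      xs (Fin.last n) = xs 0 →
      ∑ i : Fin n, (c (xs i.castSucc) (xs i.succ))⁻¹ ^ ((1 : ℝ) / (p - 1)) *
        (η (xs i.castSucc) (xs i.succ) /
          |η (xs i.castSucc) (xs i.succ)| ^ ((p - 2) / (p - 1))) = 0)
    (hstrength : ∑ x ∈ G.neighborFinset a, θ a x = ∑ x ∈ G.neighborFinset a, η a x) :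
    ∀ x y, G.Adj x y → θ x y = η x y := by
  classical
  have hp1 : (0:ℝ) < p - 1 := by linarith
  have hq : (p - 2) / (p - 1) < 1 := by
    rw [div_lt_one hp1]; linarith
  set F : ℝ → ℝ := fun t => t / |t| ^ ((p - 2) / (p - 1)) with hFdef
  have hF : StrictMono F := by
    rw [hFdef]; exact FlowsAux.strictMono_div_abs_rpow _ hq
  set φθ : V → V → ℝ :=
    fun x y => (c x y)⁻¹ ^ ((1 : ℝ) / (p - 1)) * F (θ x y) with hφθ
  set φη : V → V → ℝ :=
    fun x y => (c x y)⁻¹ ^ ((1 : ℝ) / (p - 1)) * F (η x y) with hφη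
  have hFodd : ∀ t : ℝ, F (-t) = -F t := by
    intro t; simp [hFdef, neg_div]
  have hφθanti : ∀ x y, φθ x y = -φθ y x := by
    intro x y
    rw [hφθ]
    simp only []
    rw [hc_sym x y, hθanti x y, hFodd]
    ring
  have hφηanti : ∀ x y, φη x y = -φη y x := by
    intro x y
    rw [hφη]
    simp only []
    rw [hc_sym x y, hηanti x y, hFodd]
    ring
  have hclosedθ : ∀ w : G.Walk a a, FlowsAux.wsum φθ w = 0 := by
    intro w
    rw [FlowsAux.wsum_eq]
    have h := hθcycle w.length (fun j => w.getVert j)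
      (fun i => by simpa using w.adj_getVert_succ i.isLt)
      (by simp)
    simpa [hφθ, hFdef] using h
  have hclosedη : ∀ w : G.Walk a a, FlowsAux.wsum φη w = 0 := by
    intro w
    rw [FlowsAux.wsum_eq]
    have h := hηcycle w.length (fun j => w.getVert j)
      (fun i => by simpa using w.adj_getVert_succ i.isLt)
      (by simp)
    simpa [hφη, hFdef] using h
  obtain ⟨f, hf⟩ := FlowsAux.exists_potential hconn a φθ hφθanti hclosedθ
  obtain ⟨g, hg⟩ := FlowsAux.exists_potential hconn a φη hφηanti hclosedη
  -- divergence of the difference flow vanishes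
  have hdiv' : ∀ x, x ≠ b → ∑ y ∈ G.neighborFinset x, (θ x y - η x y) = 0 := by
    intro x hxb
    rw [Finset.sum_sub_distrib]
    by_cases hxa : x = a
    · subst hxa; rw [hstrength, sub_self]
    · rw [hθnode x hxa hxb, hηnode x hxa hxb, sub_self]
  have htot : ∑ x : V, ∑ y ∈ G.neighborFinset x, (θ x y - η x y) = 0 := by
    have h1 : ∀ x : V, ∑ y ∈ G.neighborFinset x, (θ x y - η x y)
        = ∑ y : V, if G.Adj x y then (θ x y - η x y) else 0 := fun x => by
      rw [SimpleGraph.neighborFinset_eq_filter, Finset.sum_filter]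
    simp only [h1]
    have h2 : (∑ x : V, ∑ y : V, if G.Adj x y then (θ x y - η x y) else 0)
        = ∑ x : V, ∑ y : V, if G.Adj y x then (θ y x - η y x) else 0 := Finset.sum_comm
    have h3 : (∑ x : V, ∑ y : V, if G.Adj y x then (θ y x - η y x) else 0)
        = -∑ x : V, ∑ y : V, (if G.Adj x y then (θ x y - η x y) else 0) := by
      rw [← Finset.sum_neg_distrib]
      refine Finset.sum_congr rfl fun x _ => ?_
      rw [← Finset.sum_neg_distrib]
      refine Finset.sum_congr rfl fun y _ => ?_
      by_cases h : G.Adj x y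
      · rw [if_pos h.symm, if_pos h, hθanti y x, hηanti y x]; ring
      · rw [if_neg (fun hc => h hc.symm), if_neg h, neg_zero]
    linarith [h2.trans h3]
  have hdiv : ∀ x, ∑ y ∈ G.neighborFinset x, (θ x y - η x y) = 0 := by
    intro x
    by_cases hxb : x = b
    · have h4 : (∑ x : V, ∑ y ∈ G.neighborFinset x, (θ x y - η x y))
          = ∑ y ∈ G.neighborFinset b, (θ b y - η b y) :=
        Finset.sum_eq_single b (fun x _ hx => hdiv' x hx)
          (fun h => absurd (Finset.mem_univ b) h)
      rw [hxb, ← h4]; exact htot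
    · exact hdiv' x hxb
  -- the key algebraic identity for each edge
  have hterm : ∀ x y, G.Adj x y →
      (θ x y - η x y) * ((f y - g y) - (f x - g x))
        = (c x y)⁻¹ ^ ((1:ℝ)/(p-1)) * ((θ x y - η x y) * (F (θ x y) - F (η x y))) := by
    intro x y hxy
    have h5 : (f y - g y) - (f x - g x) = φθ x y - φη x y := by
      rw [hf x y hxy, hg x y hxy]; ring
    rw [h5, hφθ, hφη]
    simp only []
    ring
  have hnn : ∀ x y : V,
      0 ≤ (if G.Adj x y then (θ x y - η x y) * ((f y - g y) - (f x - g x)) else 0) := by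
    intro x y
    by_cases h : G.Adj x y
    · rw [if_pos h, hterm x y h]
      refine mul_nonneg (Real.rpow_nonneg (inv_nonneg.mpr (le_of_lt (hc_pos x y h))) _) ?_
      exact (FlowsAux.strictMono_mul_key hF (θ x y) (η x y)).1
    · rw [if_neg h]
  -- the total sum vanishes
  have hS : ∑ x : V, ∑ y : V,
      (if G.Adj x y then (θ x y - η x y) * ((f y - g y) - (f x - g x)) else 0) = 0 := by
    have hsplit : ∀ x y : V,
        (if G.Adj x y then (θ x y - η x y) * ((f y - g y) - (f x - g x)) else 0)
        = (if G.Adj x y then (θ x y - η x y) * (f y - g y) else 0)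
          - (if G.Adj x y then (θ x y - η x y) * (f x - g x) else 0) := by
      intro x y
      by_cases h : G.Adj x y
      · simp only [if_pos h]; ring
      · simp [h]
    have hB : ∑ x : V, ∑ y : V,
        (if G.Adj x y then (θ x y - η x y) * (f x - g x) else 0) = 0 := by
      refine Finset.sum_eq_zero fun x _ => ?_
      have h6 : ∑ y : V, (if G.Adj x y then (θ x y - η x y) * (f x - g x) else 0)
          = (∑ y : V, if G.Adj x y then (θ x y - η x y) else 0) * (f x - g x) := by
        rw [Finset.sum_mul]
        refine Finset.sum_congr rfl fun y _ => ?_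
        by_cases h : G.Adj x y <;> simp [h]
      rw [h6]
      have hzero : (∑ y : V, if G.Adj x y then (θ x y - η x y) else 0) = 0 := by
        rw [← Finset.sum_filter, ← SimpleGraph.neighborFinset_eq_filter]
        exact hdiv x
      rw [hzero, zero_mul]
    have hA : ∑ x : V, ∑ y : V,
        (if G.Adj x y then (θ x y - η x y) * (f y - g y) else 0) = 0 := by
      have hswap : (∑ x : V, ∑ y : V,
            if G.Adj x y then (θ x y - η x y) * (f y - g y) else 0)
          = ∑ x : V, ∑ y : V,
            if G.Adj y x then (θ y x - η y x) * (f x - g x) else 0 := Finset.sum_comm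
      rw [hswap]
      have h7 : (∑ x : V, ∑ y : V,
            if G.Adj y x then (θ y x - η y x) * (f x - g x) else 0)
          = -∑ x : V, ∑ y : V,
            (if G.Adj x y then (θ x y - η x y) * (f x - g x) else 0) := by
        rw [← Finset.sum_neg_distrib]
        refine Finset.sum_congr rfl fun x _ => ?_
        rw [← Finset.sum_neg_distrib]
        refine Finset.sum_congr rfl fun y _ => ?_
        by_cases h : G.Adj x y
        · rw [if_pos h.symm, if_pos h, hθanti y x, hηanti y x]; ring
        · rw [if_neg (fun hc => h hc.symm), if_neg h, neg_zero]
      rw [h7, hB, neg_zero]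
    calc ∑ x : V, ∑ y : V,
          (if G.Adj x y then (θ x y - η x y) * ((f y - g y) - (f x - g x)) else 0)
        = (∑ x : V, ∑ y : V, (if G.Adj x y then (θ x y - η x y) * (f y - g y) else 0))
          - ∑ x : V, ∑ y : V, (if G.Adj x y then (θ x y - η x y) * (f x - g x) else 0) := by
          simp only [hsplit, Finset.sum_sub_distrib]
      _ = 0 := by rw [hA, hB, sub_zero]
  -- each term of the sum is zero
  intro x y hxy
  have hflat : ∑ z ∈ Finset.univ ×ˢ Finset.univ,
      (if G.Adj z.1 z.2 then (θ z.1 z.2 - η z.1 z.2) * ((f z.2 - g z.2) - (f z.1 - g z.1)) else 0)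
        = 0 := by
    rw [Finset.sum_product]; exact hS
  have hzero := (Finset.sum_eq_zero_iff_of_nonneg (fun z _ => hnn z.1 z.2)).mp hflat (x, y)
    (Finset.mem_product.mpr ⟨Finset.mem_univ x, Finset.mem_univ y⟩)
  simp only [] at hzero
  rw [if_pos hxy, hterm x y hxy] at hzero
  have hrpos : 0 < (c x y)⁻¹ ^ ((1:ℝ)/(p-1)) :=
    Real.rpow_pos_of_pos (inv_pos.mpr (hc_pos x y hxy)) _
  have hE : (θ x y - η x y) * (F (θ x y) - F (η x y)) = 0 := by
    rcases mul_eq_zero.mp hzero with h | h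
    · exact absurd h (ne_of_gt hrpos)
    · exact h
  exact (FlowsAux.strictMono_mul_key hF (θ x y) (η x y)).2 hE
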